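/- For real parameters with Re(b) > 0, Re(a+b) > 0, c > 0, s > 0: ∫_0^∞ Γ(a, c z) z^{b-1} e^{-s z} dz = (c^a Γ(a+b))/(b (c+s)^{a+b}) · ₂F₁(1, a+b, b+1; s/(s+c)), where Γ(a,x) = ∫_x^∞ t^{a-1} e^{-t} dt is the upper incomplete Gamma function. -/

import Mathlib

open Real

/-- The upper incomplete Gamma function `Γ(s,x) = ∫_x^∞ t^{s-1} e^{-t} dt`. -/
noncomputable def uGamma (s x : ℝ) : ℝ := ∫ t in Set.Ioi x, t ^ (s - 1) * Real.exp (-t)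

/-- The Gauss hypergeometric function `₂F₁(a,b,c;x) = ∑_{n≥0} (a)_n (b)_n / ((c)_n n!) xⁿ`. -/
noncomputable def hyp2F1 (a b c x : ℝ) : ℝ :=
  ∑' n : ℕ, ((ascPochhammer ℝ n).eval a * (ascPochhammer ℝ n).eval b /
    ((ascPochhammer ℝ n).eval c * (n.factorial : ℝ))) * x ^ n

open MeasureTheory Set Filter

section auxiliary

lemma poch_pos {p : ℝ} (hp : 0 < p) (n : ℕ) : 0 < (ascPochhammer ℝ n).eval p := by
  induction n with
  | zero => simp
  | succ n ih =>
      rw [ascPochhammer_succ_eval]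
      exact mul_pos ih (by positivity)


lemma poch_succ_left (p : ℝ) (n : ℕ) :
    (ascPochhammer ℝ (n + 1)).eval p = p * (ascPochhammer ℝ n).eval (p + 1) := by
  rw [ascPochhammer_succ_left, Polynomial.eval_mul, Polynomial.eval_X, Polynomial.eval_comp]
  simp


lemma gamma_poch {p : ℝ} (hp : 0 < p) (n : ℕ) :
    Real.Gamma (p + n) = (ascPochhammer ℝ n).eval p * Real.Gamma p := by
  induction n with
  | zero => simp
  | succ n ih =>
      have h1 : p + (n + 1 : ℕ) = (p + n) + 1 := by push_cast; ring
      rw [h1, Real.Gamma_add_one (by positivity), ih, ascPochhammer_succ_eval]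
      ring


lemma poch_ge_factorial {p : ℝ} (hp : 1 ≤ p) (n : ℕ) :
    (n.factorial : ℝ) ≤ (ascPochhammer ℝ n).eval p := by
  induction n with
  | zero => simp
  | succ n ih =>
      rw [ascPochhammer_succ_eval, Nat.factorial_succ]
      push_cast
      have h1 : (n : ℝ) + 1 ≤ p + n := by linarith
      have h2 : (0:ℝ) < n.factorial := by positivity
      calc ((n:ℝ)+1) * n.factorial ≤ (p + n) * n.factorial := by nlinarith
        _ ≤ (p+n) * (ascPochhammer ℝ n).eval p := by
            have : (0:ℝ) < p + n := by linarith
            nlinarith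
        _ = (ascPochhammer ℝ n).eval p * (p + n) := by ring


lemma intOn_gamma {p k : ℝ} (hp : 0 < p) (hk : 0 < k) :
    IntegrableOn (fun t : ℝ => t ^ (p - 1) * Real.exp (-(k * t))) (Ioi 0) := by
  have := integrableOn_rpow_mul_exp_neg_mul_rpow (s := p - 1) (p := 1) (b := k)
    (by linarith) zero_lt_one hk
  simpa [Real.rpow_one, neg_mul] using this


lemma int_gamma_val {p k : ℝ} (hp : 0 < p) (hk : 0 < k) :
    ∫ t in Ioi (0:ℝ), t ^ (p - 1) * Real.exp (-(k * t)) = Real.Gamma p / k ^ p := by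
  rw [Real.integral_rpow_mul_exp_neg_mul_Ioi hp hk]
  rw [div_rpow zero_le_one hk.le, Real.one_rpow]
  ring


lemma intOn_beta {b : ℝ} (hb : 0 < b) (n : ℕ) :
    IntegrableOn (fun w : ℝ => w ^ (b - 1) * (1 - w) ^ n) (Ioo 0 1) := by
  have h1 : IntegrableOn (fun w : ℝ => w ^ (b - 1)) (Ioo 0 1) := by
    have := (intervalIntegral.intervalIntegrable_rpow' (a := 0) (b := 1)
      (r := b - 1) (by linarith)).1
    exact (this.mono_set Ioo_subset_Ioc_self)
  refine h1.mono' ?_ ?_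
  · exact ((measurable_id'.pow_const _).mul
      ((measurable_const.sub measurable_id).pow_const _)).aestronglyMeasurable
  · filter_upwards [ae_restrict_mem measurableSet_Ioo] with w hw
    have hw0 : 0 < w := hw.1
    have hw1 : w < 1 := hw.2
    have h1w : 0 ≤ 1 - w := by linarith
    rw [Real.norm_eq_abs, abs_mul, abs_of_nonneg (Real.rpow_nonneg hw0.le _),
      abs_of_nonneg (pow_nonneg h1w _)]
    have : (1 - w) ^ n ≤ 1 := pow_le_one₀ h1w (by linarith)
    nlinarith [Real.rpow_pos_of_pos hw0 (b - 1)]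


lemma beta_val (n : ℕ) : ∀ b : ℝ, 0 < b →
    ∫ w in Ioo (0:ℝ) 1, w ^ (b - 1) * (1 - w) ^ n
      = (n.factorial : ℝ) / (ascPochhammer ℝ (n + 1)).eval b := by
  induction n with
  | zero =>
      intro b hb
      have : ∫ w in Ioo (0:ℝ) 1, w ^ (b - 1) * (1 - w) ^ 0
          = ∫ w in (0:ℝ)..1, w ^ (b - 1) := by
        rw [intervalIntegral.integral_of_le zero_le_one,
          MeasureTheory.integral_Ioc_eq_integral_Ioo]
        simp
      rw [this, integral_rpow (Or.inl (by linarith)), show b - 1 + 1 = b by ring,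
        Real.zero_rpow hb.ne', Real.one_rpow]
      simp [ascPochhammer_one]
  | succ n ih =>
      intro b hb
      have key : ∀ w ∈ Ioo (0:ℝ) 1,
          w ^ (b - 1) * (1 - w) ^ (n + 1)
            = w ^ (b - 1) * (1 - w) ^ n - w ^ (b + 1 - 1) * (1 - w) ^ n := by
        intro w hw
        have hw0 : w ≠ 0 := ne_of_gt hw.1
        have h1 : w ^ (b + 1 - 1) = w ^ (b - 1) * w := by
          rw [show b + 1 - 1 = (b - 1) + 1 by ring, Real.rpow_add_one hw0]
        rw [pow_succ, h1]; ring
      rw [setIntegral_congr_fun measurableSet_Ioo key,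
        MeasureTheory.integral_sub (intOn_beta hb n)
          (intOn_beta (by linarith : (0:ℝ) < b + 1) n),
        ih b hb, ih (b + 1) (by linarith)]
      have e1 : (ascPochhammer ℝ (n + 1 + 1)).eval b
          = b * ((ascPochhammer ℝ n).eval (b + 1) * (b + 1 + n)) := by
        rw [ascPochhammer_succ_left, Polynomial.eval_mul, Polynomial.eval_X,
          Polynomial.eval_comp]
        simp [ascPochhammer_succ_eval]
      have e2 : (ascPochhammer ℝ (n + 1)).eval b
          = b * (ascPochhammer ℝ n).eval (b + 1) := by
        rw [ascPochhammer_succ_left, Polynomial.eval_mul, Polynomial.eval_X,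
          Polynomial.eval_comp]
        simp
      have e3 : (ascPochhammer ℝ (n + 1)).eval (b + 1)
          = (ascPochhammer ℝ n).eval (b + 1) * (b + 1 + n) := by
        rw [ascPochhammer_succ_eval]
      have hA : 0 < (ascPochhammer ℝ n).eval (b + 1) := poch_pos (by linarith) n
      rw [e1, e2, e3, Nat.factorial_succ]
      have hbn : (0:ℝ) < b + 1 + n := by positivity
      field_simp
      push_cast
      ring


lemma summable_aux {G K y : ℝ} (hG : 0 < G) (hy : 0 < y) (hyK : y < K) :
    Summable (fun n : ℕ => y ^ n * Real.Gamma (G + n) / (n.factorial * K ^ (G + n))) := by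
  have hK : 0 < K := hy.trans hyK
  set f : ℕ → ℝ := fun n => y ^ n * Real.Gamma (G + n) / (n.factorial * K ^ (G + n)) with hf
  have hfpos : ∀ n, 0 < f n := by
    intro n
    have h1 : 0 < Real.Gamma (G + n) := Real.Gamma_pos_of_pos (by positivity)
    have h2 : 0 < K ^ (G + n) := Real.rpow_pos_of_pos hK _
    have h3 : (0:ℝ) < n.factorial := by positivity
    positivity
  refine summable_of_ratio_test_tendsto_lt_one (l := y / K)
    ((div_lt_one hK).mpr hyK) (Eventually.of_forall fun n => (hfpos n).ne') ?_
  have hratio : ∀ n : ℕ, ‖f (n + 1)‖ / ‖f n‖ = (y / K) * ((G + n) / (n + 1)) := by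
    intro n
    rw [Real.norm_of_nonneg (hfpos (n+1)).le, Real.norm_of_nonneg (hfpos n).le, hf]
    have e1 : G + ((n : ℕ) + 1 : ℕ) = (G + n) + 1 := by push_cast; ring
    have e2 : Real.Gamma ((G + n) + 1) = (G + n) * Real.Gamma (G + n) :=
      Real.Gamma_add_one (by positivity)
    have e3 : K ^ (G + ((n : ℕ) + 1 : ℕ)) = K ^ (G + n) * K := by
      rw [e1, Real.rpow_add_one hK.ne']
    have h1 : 0 < Real.Gamma (G + n) := Real.Gamma_pos_of_pos (by positivity)
    have h2 : 0 < K ^ (G + n) := Real.rpow_pos_of_pos hK _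
    have h3 : (0:ℝ) < n.factorial := by positivity
    simp only [e1, e2, e3, Nat.factorial_succ]
    push_cast
    rw [Real.rpow_add_one hK.ne' (G + (n:ℝ))]
    field_simp
    ring
  simp only [hratio]
  have h2 : Tendsto (fun n : ℕ => (G + n) / ((n : ℝ) + 1)) atTop (nhds 1) := by
    have h3 : Tendsto (fun n : ℕ => 1 + (G - 1) * (1 / ((n:ℝ) + 1))) atTop (nhds (1 + (G-1) * 0)) :=
      tendsto_const_nhds.add (tendsto_const_nhds.mul tendsto_one_div_add_atTop_nhds_zero_nat)
    rw [mul_zero, add_zero] at h3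
    refine h3.congr fun n => ?_
    have : ((n : ℝ) + 1) ≠ 0 := by positivity
    field_simp
    ring
  have := (tendsto_const_nhds (x := y / K)).mul h2
  rwa [mul_one] at this


lemma tsum_exp_series (u : ℝ) : ∑' n : ℕ, u ^ n / (n.factorial : ℝ) = Real.exp u := by
  rw [Real.exp_eq_exp_ℝ, NormedSpace.exp_eq_tsum_div]


lemma hasSum_gamma_series {G K y : ℝ} (hG : 0 < G) (hy : 0 < y) (hyK : y < K) :
    HasSum (fun n : ℕ => y ^ n * Real.Gamma (G + n) / (n.factorial * K ^ (G + n)))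
      (Real.Gamma G / (K - y) ^ G) := by
  have hK : 0 < K := hy.trans hyK
  have hK' : 0 < K - y := by linarith
  have hsum := summable_aux hG hy hyK
  set F : ℕ → ℝ → ℝ :=
    fun n t => (y ^ n / n.factorial) * (t ^ (G + n - 1) * Real.exp (-(K * t))) with hF
  have hF_int : ∀ n, Integrable (F n) (volume.restrict (Ioi 0)) := fun n =>
    (intOn_gamma (p := G + n) (by positivity) hK).const_mul _
  have hval : ∀ n, ∫ t in Ioi (0:ℝ), F n t
      = y ^ n * Real.Gamma (G + n) / (n.factorial * K ^ (G + n)) := by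
    intro n
    rw [hF]
    simp only []
    rw [MeasureTheory.integral_const_mul, int_gamma_val (by positivity : (0:ℝ) < G + n) hK,
      div_mul_div_comm]
  have hnonneg : ∀ n, ∀ t ∈ Ioi (0:ℝ), 0 ≤ F n t := by
    intro n t ht
    have ht0 : (0:ℝ) < t := ht
    have : (0:ℝ) < n.factorial := by positivity
    positivity
  have hnorm : ∀ n, ∫ t in Ioi (0:ℝ), ‖F n t‖ = ∫ t in Ioi (0:ℝ), F n t := fun n =>
    setIntegral_congr_fun measurableSet_Ioi fun t ht => Real.norm_of_nonneg (hnonneg n t ht)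
  have hsum2 : Summable fun n => ∫ t in Ioi (0:ℝ), ‖F n t‖ := by
    have he : (fun n => ∫ t in Ioi (0:ℝ), ‖F n t‖)
        = fun n : ℕ => y ^ n * Real.Gamma (G + n) / (n.factorial * K ^ (G + n)) :=
      funext fun n => (hnorm n).trans (hval n)
    rw [he]; exact hsum
  have hswap := MeasureTheory.integral_tsum_of_summable_integral_norm hF_int hsum2
  have hpt : ∀ t ∈ Ioi (0:ℝ), ∑' n, F n t = t ^ (G - 1) * Real.exp (-((K - y) * t)) := by
    intro t ht
    have ht0 : (0:ℝ) < t := ht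
    have e1 : ∀ n : ℕ, F n t
        = (t ^ (G - 1) * Real.exp (-(K * t))) * ((y * t) ^ n / n.factorial) := by
      intro n
      have e2 : t ^ (G + n - 1) = t ^ (G - 1) * t ^ n := by
        rw [show G + n - 1 = (G - 1) + n by ring, Real.rpow_add ht0, Real.rpow_natCast]
      rw [hF]
      simp only []
      rw [e2, mul_pow]
      ring
    calc ∑' n, F n t
        = ∑' n, (t ^ (G - 1) * Real.exp (-(K * t))) * ((y * t) ^ n / n.factorial) :=
          tsum_congr e1
      _ = (t ^ (G - 1) * Real.exp (-(K * t))) * Real.exp (y * t) := by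
          rw [tsum_mul_left, tsum_exp_series]
      _ = t ^ (G - 1) * Real.exp (-((K - y) * t)) := by
          rw [mul_assoc, ← Real.exp_add, show -(K * t) + y * t = -((K - y) * t) by ring]
  rw [hsum.hasSum_iff]
  calc ∑' n : ℕ, y ^ n * Real.Gamma (G + n) / (n.factorial * K ^ (G + n))
      = ∑' n, ∫ t in Ioi (0:ℝ), F n t := tsum_congr fun n => (hval n).symm
    _ = ∫ t in Ioi (0:ℝ), ∑' n, F n t := hswap
    _ = ∫ t in Ioi (0:ℝ), t ^ (G - 1) * Real.exp (-((K - y) * t)) :=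
        setIntegral_congr_fun measurableSet_Ioi fun t ht => hpt t ht
    _ = Real.Gamma G / (K - y) ^ G := int_gamma_val hG hK'


lemma uGamma_scale {a c z : ℝ} (hc : 0 < c) (hz : 0 < z) :
    uGamma a (c * z) = z ^ a * ∫ τ in Ioi c, τ ^ (a - 1) * Real.exp (-(z * τ)) := by
  have key := MeasureTheory.integral_comp_mul_left_Ioi
    (fun t => t ^ (a - 1) * Real.exp (-t)) c hz
  have h1 : ∫ t in Ioi (z * c), t ^ (a - 1) * Real.exp (-t)
      = z • ∫ τ in Ioi c, (z * τ) ^ (a - 1) * Real.exp (-(z * τ)) := by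
    rw [key, smul_inv_smul₀ hz.ne']
  have h2 : ∫ τ in Ioi c, (z * τ) ^ (a - 1) * Real.exp (-(z * τ))
      = z ^ (a - 1) * ∫ τ in Ioi c, τ ^ (a - 1) * Real.exp (-(z * τ)) := by
    rw [← MeasureTheory.integral_const_mul]
    refine setIntegral_congr_fun measurableSet_Ioi fun τ hτ => ?_
    have hτ0 : (0:ℝ) < τ := hc.trans hτ
    rw [Real.mul_rpow hz.le hτ0.le]
    ring
  have h3 : z * z ^ (a - 1) = z ^ a := by
    calc z * z ^ (a - 1) = z ^ (1:ℝ) * z ^ (a - 1) := by rw [Real.rpow_one]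
      _ = z ^ (1 + (a - 1)) := (Real.rpow_add hz _ _).symm
      _ = z ^ a := by norm_num
  unfold uGamma
  rw [show c * z = z * c by ring, h1, h2, smul_eq_mul, ← mul_assoc, h3]


lemma integrand_eq {a b c s : ℝ} (hc : 0 < c) {z : ℝ} (hz : 0 < z) :
    uGamma a (c * z) * z ^ (b - 1) * Real.exp (-(s * z))
      = ∫ τ in Ioi c, z ^ (a + b - 1) * (τ ^ (a - 1) * Real.exp (-((τ + s) * z))) := by
  have h0 : uGamma a (c * z) * z ^ (b - 1) * Real.exp (-(s * z))
      = (z ^ (b - 1) * Real.exp (-(s * z)) * z ^ a)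
        * ∫ τ in Ioi c, τ ^ (a - 1) * Real.exp (-(z * τ)) := by
    rw [uGamma_scale hc hz]; ring
  rw [h0, ← MeasureTheory.integral_const_mul]
  refine setIntegral_congr_fun measurableSet_Ioi fun τ hτ => ?_
  rw [show -((τ + s) * z) = -(s * z) + -(z * τ) by ring, Real.exp_add,
    show a + b - 1 = (b - 1) + a by ring, Real.rpow_add hz]
  ring


lemma double_int {a b c s : ℝ} (hb : 0 < b) (hab : 0 < a + b) (hc : 0 < c) (hs : 0 < s) :
    ∫ z in Ioi (0:ℝ), uGamma a (c * z) * z ^ (b - 1) * Real.exp (-(s * z))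
      = ∫ τ in Ioi c, τ ^ (a - 1) * (Real.Gamma (a + b) / (τ + s) ^ (a + b)) := by
  have hmeas : AEStronglyMeasurable
      (Function.uncurry fun z τ => z ^ (a + b - 1) * (τ ^ (a - 1)
        * Real.exp (-((τ + s) * z))))
      ((volume.restrict (Ioi (0:ℝ))).prod (volume.restrict (Ioi c))) := by
    apply Measurable.aestronglyMeasurable
    exact (measurable_fst.pow_const _).mul ((measurable_snd.pow_const _).mul
      (((measurable_snd.add_const s).mul measurable_fst).neg.exp))
  have hsect : ∀ τ : ℝ, c < τ → Integrable
      (fun z => z ^ (a + b - 1) * (τ ^ (a - 1) * Real.exp (-((τ + s) * z))))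
      (volume.restrict (Ioi (0:ℝ))) := by
    intro τ hτ
    have hτs : 0 < τ + s := by have := hc.trans hτ; linarith
    have he : (fun z : ℝ => z ^ (a + b - 1) * (τ ^ (a - 1) * Real.exp (-((τ + s) * z))))
        = fun z : ℝ => τ ^ (a - 1) * (z ^ (a + b - 1) * Real.exp (-((τ + s) * z))) := by
      funext z; ring
    rw [he]
    exact (intOn_gamma hab hτs).const_mul _
  have hnormint : ∀ τ : ℝ, c < τ →
      (∫ z in Ioi (0:ℝ), ‖z ^ (a + b - 1) * (τ ^ (a - 1) * Real.exp (-((τ + s) * z)))‖)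
        = τ ^ (a - 1) * (Real.Gamma (a + b) / (τ + s) ^ (a + b)) := by
    intro τ hτ
    have hτ0 : (0:ℝ) < τ := hc.trans hτ
    have hτs : 0 < τ + s := by linarith
    have h1 : ∀ z ∈ Ioi (0:ℝ),
        ‖z ^ (a + b - 1) * (τ ^ (a - 1) * Real.exp (-((τ + s) * z)))‖
          = τ ^ (a - 1) * (z ^ (a + b - 1) * Real.exp (-((τ + s) * z))) := by
      intro z hz
      have hz0 : (0:ℝ) < z := hz
      rw [Real.norm_of_nonneg (by positivity)]
      ring
    rw [setIntegral_congr_fun measurableSet_Ioi h1, MeasureTheory.integral_const_mul,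
      int_gamma_val hab hτs]
  have hnorm_integrable : Integrable
      (fun τ => ∫ z in Ioi (0:ℝ),
        ‖z ^ (a + b - 1) * (τ ^ (a - 1) * Real.exp (-((τ + s) * z)))‖)
      (volume.restrict (Ioi c)) := by
    have hg : Integrable (fun τ : ℝ => τ ^ (a - 1) * (Real.Gamma (a + b) / (τ + s) ^ (a + b)))
        (volume.restrict (Ioi c)) := by
      refine Integrable.mono' ((integrableOn_Ioi_rpow_of_lt
        (by linarith : -(b + 1) < -1) hc).const_mul (Real.Gamma (a + b))) ?_ ?_
      · exact ((measurable_id'.pow_const _).mul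
          (measurable_const.div ((measurable_id'.add_const s).pow_const _))).aestronglyMeasurable
      · filter_upwards [ae_restrict_mem measurableSet_Ioi] with τ hτ
        have hτ0 : (0:ℝ) < τ := hc.trans hτ
        have hτs : 0 < τ + s := by linarith
        have hΓ : 0 < Real.Gamma (a + b) := Real.Gamma_pos_of_pos hab
        rw [Real.norm_of_nonneg (by positivity)]
        have hle : τ ^ (a + b) ≤ (τ + s) ^ (a + b) :=
          Real.rpow_le_rpow hτ0.le (by linarith) hab.le
        have h2 : Real.Gamma (a + b) / (τ + s) ^ (a + b)
            ≤ Real.Gamma (a + b) / τ ^ (a + b) :=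
          div_le_div_of_nonneg_left hΓ.le (Real.rpow_pos_of_pos hτ0 _) hle
        calc τ ^ (a - 1) * (Real.Gamma (a + b) / (τ + s) ^ (a + b))
            ≤ τ ^ (a - 1) * (Real.Gamma (a + b) / τ ^ (a + b)) := by
              have := Real.rpow_pos_of_pos hτ0 (a - 1)
              nlinarith
          _ = Real.Gamma (a + b) * (τ ^ (a - 1) / τ ^ (a + b)) := by ring
          _ = Real.Gamma (a + b) * τ ^ (-(b + 1)) := by
              rw [← Real.rpow_sub hτ0, show a - 1 - (a + b) = -(b + 1) by ring]
    refine hg.congr ?_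
    filter_upwards [ae_restrict_mem measurableSet_Ioi] with τ hτ
    exact (hnormint τ hτ).symm
  have hint : Integrable
      (Function.uncurry fun z τ => z ^ (a + b - 1) * (τ ^ (a - 1)
        * Real.exp (-((τ + s) * z))))
      ((volume.restrict (Ioi (0:ℝ))).prod (volume.restrict (Ioi c))) := by
    rw [MeasureTheory.integrable_prod_iff' hmeas]
    constructor
    · filter_upwards [ae_restrict_mem measurableSet_Ioi] with τ hτ
      exact hsect τ hτ
    · exact hnorm_integrable
  calc ∫ z in Ioi (0:ℝ), uGamma a (c * z) * z ^ (b - 1) * Real.exp (-(s * z))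
      = ∫ z in Ioi (0:ℝ), ∫ τ in Ioi c, z ^ (a + b - 1) * (τ ^ (a - 1)
          * Real.exp (-((τ + s) * z))) :=
        setIntegral_congr_fun measurableSet_Ioi fun z hz => integrand_eq hc hz
    _ = ∫ τ in Ioi c, ∫ z in Ioi (0:ℝ), z ^ (a + b - 1) * (τ ^ (a - 1)
          * Real.exp (-((τ + s) * z))) := MeasureTheory.integral_integral_swap hint
    _ = ∫ τ in Ioi c, τ ^ (a - 1) * (Real.Gamma (a + b) / (τ + s) ^ (a + b)) := by
        refine setIntegral_congr_fun measurableSet_Ioi fun τ hτ => ?_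
        have hτ0 : (0:ℝ) < τ := hc.trans hτ
        have hτs : 0 < τ + s := by linarith
        have he : (fun z : ℝ => z ^ (a + b - 1) * (τ ^ (a - 1) * Real.exp (-((τ + s) * z))))
            = fun z : ℝ => τ ^ (a - 1) * (z ^ (a + b - 1) * Real.exp (-((τ + s) * z))) := by
          funext z; ring
        rw [he, MeasureTheory.integral_const_mul, int_gamma_val hab hτs]


lemma subst_cw {a b c s : ℝ} (hb : 0 < b) (hab : 0 < a + b) (hc : 0 < c) (hs : 0 < s) :
    ∫ τ in Ioi c, τ ^ (a - 1) * (Real.Gamma (a + b) / (τ + s) ^ (a + b))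
      = c ^ a * ∫ w in Ioo (0:ℝ) 1,
          w ^ (b - 1) * (Real.Gamma (a + b) / (c + s * w) ^ (a + b)) := by
  have himg : (fun w : ℝ => c / w) '' Ioo 0 1 = Ioi c := by
    ext τ
    constructor
    · rintro ⟨w, hw, rfl⟩
      have hw0 : 0 < w := hw.1
      have hw1 : w < 1 := hw.2
      rw [mem_Ioi, lt_div_iff₀ hw0]
      exact mul_lt_of_lt_one_right hc hw1
    · intro hτ
      have hτ0 : (0:ℝ) < τ := hc.trans hτ
      refine ⟨c / τ, ⟨by positivity, (div_lt_one hτ0).mpr hτ⟩, ?_⟩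
      field_simp
  have hderiv : ∀ w ∈ Ioo (0:ℝ) 1,
      HasDerivWithinAt (fun w : ℝ => c / w) (-(c / (w * w))) (Ioo 0 1) w := by
    intro w hw
    have hw0 : w ≠ 0 := ne_of_gt hw.1
    have h := (hasDerivAt_inv hw0).const_mul c
    have h' : HasDerivAt (fun x : ℝ => c / x) (-(c / (w * w))) w := by
      have e1 : (fun x : ℝ => c * x⁻¹) = fun x : ℝ => c / x := by
        funext x; rw [div_eq_mul_inv]
      have e2 : c * -(w ^ 2)⁻¹ = -(c / (w * w)) := by
        rw [pow_two]; ring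
      rw [e1, e2] at h
      exact h
    exact h'.hasDerivWithinAt
  have hinj : InjOn (fun w : ℝ => c / w) (Ioo 0 1) := by
    intro w1 h1 w2 h2 heq
    simp only at heq
    rw [div_eq_div_iff h1.1.ne' h2.1.ne'] at heq
    exact (mul_left_cancel₀ hc.ne' heq).symm
  have key := MeasureTheory.integral_image_eq_integral_abs_deriv_smul
    measurableSet_Ioo hderiv hinj
    (fun τ => τ ^ (a - 1) * (Real.Gamma (a + b) / (τ + s) ^ (a + b)))
  rw [himg] at key
  rw [key, ← MeasureTheory.integral_const_mul]
  refine setIntegral_congr_fun measurableSet_Ioo fun w hw => ?_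
  have hw0 : 0 < w := hw.1
  have hw1 : w < 1 := hw.2
  have hcw : 0 < c + s * w := by positivity
  have habs : |(-(c / (w * w)))| = c / (w * w) := by
    rw [abs_neg, abs_of_pos (by positivity)]
  rw [smul_eq_mul, habs]
  have e1 : c / w + s = (c + s * w) / w := by field_simp
  have e2 : ((c + s * w) / w) ^ (a + b) = (c + s * w) ^ (a + b) / w ^ (a + b) :=
    Real.div_rpow hcw.le hw0.le (a + b)
  have e3 : (c / w) ^ (a - 1) = c ^ (a - 1) / w ^ (a - 1) :=
    Real.div_rpow hc.le hw0.le (a - 1)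
  have ec : c ^ a = c ^ (a - 1) * c := by
    rw [← Real.rpow_add_one hc.ne']; norm_num
  have ew : w ^ (a + b) = w ^ (b - 1) * w ^ (a - 1) * (w * w) := by
    have h2 : w * w = w ^ ((2:ℕ) : ℝ) := by
      rw [Real.rpow_natCast, pow_two]
    rw [h2, ← Real.rpow_add hw0, ← Real.rpow_add hw0,
      show b - 1 + (a - 1) + ((2:ℕ):ℝ) = a + b by push_cast; ring]
  rw [e1, e2, e3, ec, ew]
  have hne1 : w ^ (a - 1) ≠ 0 := (Real.rpow_pos_of_pos hw0 _).ne'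
  have hne2 : w ^ (b - 1) ≠ 0 := (Real.rpow_pos_of_pos hw0 _).ne'
  have hne3 : (c + s * w) ^ (a + b) ≠ 0 := (Real.rpow_pos_of_pos hcw _).ne'
  field_simp


lemma main_sum {a b c s : ℝ} (hb : 0 < b) (hab : 0 < a + b) (hc : 0 < c) (hs : 0 < s) :
    ∫ w in Ioo (0:ℝ) 1, w ^ (b - 1) * (Real.Gamma (a + b) / (c + s * w) ^ (a + b))
      = Real.Gamma (a + b) / (b * (c + s) ^ (a + b))
          * hyp2F1 1 (a + b) (b + 1) (s / (s + c)) := by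
  have hK : (0:ℝ) < c + s := by linarith
  set C : ℕ → ℝ :=
    fun n => s ^ n * Real.Gamma (a + b + n) / (n.factorial * (c + s) ^ (a + b + n)) with hC
  set F : ℕ → ℝ → ℝ := fun n w => w ^ (b - 1)
    * ((s * (1 - w)) ^ n * Real.Gamma (a + b + n)
        / (n.factorial * (c + s) ^ (a + b + n))) with hF
  have hFrep : ∀ n : ℕ, F n = fun w => C n * (w ^ (b - 1) * (1 - w) ^ n) := by
    intro n
    funext w
    rw [hF, hC]
    simp only [mul_pow]
    ring
  have hCpos : ∀ n, 0 < C n := by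
    intro n
    rw [hC]
    have h1 : 0 < Real.Gamma (a + b + n) := Real.Gamma_pos_of_pos (by positivity)
    have h2 : 0 < (c + s) ^ (a + b + (n:ℝ)) := Real.rpow_pos_of_pos hK _
    have h3 : (0:ℝ) < n.factorial := by positivity
    positivity
  have hF_int : ∀ n, Integrable (F n) (volume.restrict (Ioo (0:ℝ) 1)) := by
    intro n
    rw [hFrep n]
    exact (intOn_beta hb n).const_mul _
  have hval : ∀ n, ∫ w in Ioo (0:ℝ) 1, F n w
      = C n * (n.factorial / (ascPochhammer ℝ (n + 1)).eval b) := by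
    intro n
    rw [hFrep n, MeasureTheory.integral_const_mul, beta_val n b hb]
  have hnorm : ∀ n, ∫ w in Ioo (0:ℝ) 1, ‖F n w‖ = ∫ w in Ioo (0:ℝ) 1, F n w := by
    intro n
    refine setIntegral_congr_fun measurableSet_Ioo fun w hw => ?_
    rw [hFrep n]
    have hw0 : 0 < w := hw.1
    have hw1 : 0 ≤ 1 - w := by have := hw.2; linarith
    exact Real.norm_of_nonneg (mul_nonneg (hCpos n).le (by positivity))
  have hvals_summable : Summable
      (fun n => C n * (n.factorial / (ascPochhammer ℝ (n + 1)).eval b)) := by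
    refine Summable.of_nonneg_of_le (fun n => ?_) (fun n => ?_)
      ((summable_aux hab hs (show s < c + s by linarith)).mul_right (1 / b))
    · exact mul_nonneg (hCpos n).le (div_nonneg (by positivity) (poch_pos hb (n+1)).le)
    · have h1 : (n.factorial : ℝ) / (ascPochhammer ℝ (n + 1)).eval b ≤ 1 / b := by
        rw [poch_succ_left]
        have h2 : (0:ℝ) < n.factorial := by positivity
        have h3 : b * n.factorial ≤ b * (ascPochhammer ℝ n).eval (b + 1) := by
          have := poch_ge_factorial (by linarith : (1:ℝ) ≤ b + 1) n
          nlinarith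
        calc (n.factorial : ℝ) / (b * (ascPochhammer ℝ n).eval (b + 1))
            ≤ (n.factorial : ℝ) / (b * n.factorial) :=
              div_le_div_of_nonneg_left h2.le (by positivity) h3
          _ = 1 / b := by
              rw [mul_comm]
              field_simp
      calc C n * (n.factorial / (ascPochhammer ℝ (n + 1)).eval b)
          ≤ C n * (1 / b) := mul_le_mul_of_nonneg_left h1 (hCpos n).le
        _ = s ^ n * Real.Gamma (a + b + n) / (n.factorial * (c + s) ^ (a + b + n)) * (1/b) := by
            rw [hC]
  have hsum2 : Summable fun n => ∫ w in Ioo (0:ℝ) 1, ‖F n w‖ := by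
    have he : (fun n => ∫ w in Ioo (0:ℝ) 1, ‖F n w‖)
        = fun n => C n * (n.factorial / (ascPochhammer ℝ (n + 1)).eval b) :=
      funext fun n => (hnorm n).trans (hval n)
    rw [he]
    exact hvals_summable
  have hpt : ∀ w ∈ Ioo (0:ℝ) 1,
      ∑' n, F n w = w ^ (b - 1) * (Real.Gamma (a + b) / (c + s * w) ^ (a + b)) := by
    intro w hw
    have hw0 : 0 < w := hw.1
    have hw1 : w < 1 := hw.2
    have hy : 0 < s * (1 - w) := by nlinarith
    have hyK : s * (1 - w) < c + s := by nlinarith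
    have h := hasSum_gamma_series hab hy hyK
    rw [show c + s - s * (1 - w) = c + s * w by ring] at h
    exact (h.mul_left (w ^ (b - 1))).tsum_eq
  have hterm : ∀ n : ℕ, C n * (n.factorial / (ascPochhammer ℝ (n + 1)).eval b)
      = Real.Gamma (a + b) / (b * (c + s) ^ (a + b))
        * ((ascPochhammer ℝ n).eval 1 * (ascPochhammer ℝ n).eval (a + b)
            / ((ascPochhammer ℝ n).eval (b + 1) * (n.factorial : ℝ))
          * (s / (s + c)) ^ n) := by
    intro n
    simp only [hC]
    rw [poch_succ_left, ascPochhammer_eval_one, gamma_poch hab n,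
      Real.rpow_add hK (a + b) n, Real.rpow_natCast,
      show s + c = c + s by ring, div_pow]
    have h1 : ((n.factorial : ℝ)) ≠ 0 := by positivity
    have h2 : (c + s) ^ (a + b) ≠ 0 := (Real.rpow_pos_of_pos hK _).ne'
    have h3 : (c + s) ^ n ≠ 0 := by positivity
    have h4 : (ascPochhammer ℝ n).eval (b + 1) ≠ 0 := (poch_pos (by linarith) n).ne'
    field_simp
  calc ∫ w in Ioo (0:ℝ) 1, w ^ (b - 1) * (Real.Gamma (a + b) / (c + s * w) ^ (a + b))
      = ∫ w in Ioo (0:ℝ) 1, ∑' n, F n w :=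
        (setIntegral_congr_fun measurableSet_Ioo fun w hw => (hpt w hw).symm)
    _ = ∑' n, ∫ w in Ioo (0:ℝ) 1, F n w :=
        (MeasureTheory.integral_tsum_of_summable_integral_norm hF_int hsum2).symm
    _ = ∑' n, C n * (n.factorial / (ascPochhammer ℝ (n + 1)).eval b) := tsum_congr hval
    _ = ∑' n : ℕ, Real.Gamma (a + b) / (b * (c + s) ^ (a + b))
        * ((ascPochhammer ℝ n).eval 1 * (ascPochhammer ℝ n).eval (a + b)
            / ((ascPochhammer ℝ n).eval (b + 1) * (n.factorial : ℝ))
          * (s / (s + c)) ^ n) := tsum_congr hterm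
    _ = Real.Gamma (a + b) / (b * (c + s) ^ (a + b))
          * hyp2F1 1 (a + b) (b + 1) (s / (s + c)) := by
        rw [tsum_mul_left]
        simp only [hyp2F1]

end auxiliary

/-- For `b > 0`, `a + b > 0`, `c > 0`, `s > 0`:
`∫_0^∞ Γ(a,cz) z^{b-1} e^{-sz} dz = (c^a Γ(a+b))/(b (c+s)^{a+b}) ₂F₁(1, a+b, b+1; s/(s+c))`. -/
theorem incomplete_gamma_laplace_transform (a b c s : ℝ)
    (hb : 0 < b) (hab : 0 < a + b) (hc : 0 < c) (hs : 0 < s) :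
    ∫ z in Set.Ioi (0 : ℝ), uGamma a (c * z) * z ^ (b - 1) * Real.exp (-(s * z))
      = c ^ a * Real.Gamma (a + b) / (b * (c + s) ^ (a + b)) *
          hyp2F1 1 (a + b) (b + 1) (s / (s + c)) := by
  calc ∫ z in Set.Ioi (0 : ℝ), uGamma a (c * z) * z ^ (b - 1) * Real.exp (-(s * z))
      = ∫ τ in Ioi c, τ ^ (a - 1) * (Real.Gamma (a + b) / (τ + s) ^ (a + b)) :=
        double_int hb hab hc hs
    _ = c ^ a * ∫ w in Ioo (0:ℝ) 1,
          w ^ (b - 1) * (Real.Gamma (a + b) / (c + s * w) ^ (a + b)) :=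
        subst_cw hb hab hc hs
    _ = c ^ a * (Real.Gamma (a + b) / (b * (c + s) ^ (a + b))
          * hyp2F1 1 (a + b) (b + 1) (s / (s + c))) := by
        rw [main_sum hb hab hc hs]
    _ = c ^ a * Real.Gamma (a + b) / (b * (c + s) ^ (a + b)) *
          hyp2F1 1 (a + b) (b + 1) (s / (s + c)) := by ring
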